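/- Consider a weighted online resource allocation instance: a finite set R of resources, each with cost function c_r : ℝ_{≥0} → ℝ_{≥0} that is nondecreasing, differentiable, and such that t ↦ t·c_r(t) is convex; and n requests with weights w_i > 0 and nonempty allocation sets 𝒮_i ⊆ 2^R. Suppose β ≥ 1 is a real number with c_r(x) + c_r'(x)·x ≤ β·c_r(x) for all r ∈ R and all x ≥ 0, and suppose λ > 0 and μ ∈ [0, 1/β) are real numbers such that x·c_r(x+y) ≤ λ·x·c_r(x) + μ·y·c_r(y) for all x, y ≥ 0 and all r ∈ R. Let S = (S_1,…,S_n) be an allocation vector produced by the best reply algorithm, i.e., for every i and every S' ∈ 𝒮_i, ∑_{r ∈ S_i} c_r(ℓ_r(i)+w_i) ≤ ∑_{r ∈ S'} c_r(ℓ_r(i)+w_i) with ℓ_r(i) = ∑_{j < i, r ∈ S_j} w_j. Then for every feasible allocation vector S*, ∑_{r ∈ R} w_r(S)·c_r(w_r(S)) ≤ (β·λ/(1 − β·μ)) · ∑_{r ∈ R} w_r(S*)·c_r(w_r(S*)), where w_r(T) = ∑_{i : r ∈ T_i} w_i. -/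

import Mathlib

open Finset

section Aux
variable {R : Type} [DecidableEq R]

private lemma br_step_bound (c : ℝ → ℝ) (hdiff : Differentiable ℝ c)
    (hconv : ConvexOn ℝ (Set.Ici 0) (fun t => t * c t))
    (β : ℝ) (hβbound : ∀ x : ℝ, 0 ≤ x → c x + deriv c x * x ≤ β * c x)
    (x v : ℝ) (hx : 0 ≤ x) (hv : 0 < v) :
    (x + v) * c (x + v) - x * c x ≤ β * (v * c (x + v)) := by
  have hfd : Differentiable ℝ (fun t : ℝ => t * c t) := differentiable_id.mul hdiff
  have hxv : (0:ℝ) ≤ x + v := by linarith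
  have hslope := hconv.slope_le_deriv (Set.mem_Ici.2 hx) (Set.mem_Ici.2 hxv)
    (by linarith) (hfd (x + v))
  rw [slope_def_field] at hslope
  have hd : deriv (fun t : ℝ => t * c t) (x + v) = c (x + v) + deriv c (x + v) * (x + v) := by
    rw [deriv_fun_mul differentiableAt_fun_id (hdiff (x + v))]
    simp [mul_comm]
  rw [hd] at hslope
  have h2 : ((x + v) * c (x + v) - x * c x) / v ≤ β * c (x + v) :=
    le_trans (by simpa using hslope) (hβbound (x + v) hxv)
  have := (div_le_iff₀ hv).mp h2
  nlinarith

private lemma br_Lsucc (n : ℕ) (w : Fin n → ℝ) (S : Fin n → Finset R) (r : R) (i : Fin n) :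
    ∑ j ∈ Finset.univ.filter (fun j : Fin n => (j:ℕ) < (i:ℕ) + 1 ∧ r ∈ S j), w j
    = (∑ j ∈ Finset.univ.filter (fun j : Fin n => (j:ℕ) < (i:ℕ) ∧ r ∈ S j), w j)
      + (if r ∈ S i then w i else 0) := by
  rw [Finset.sum_filter, Finset.sum_filter]
  have : (if r ∈ S i then w i else 0)
      = ∑ j : Fin n, if j = i then (if r ∈ S j then w j else 0) else 0 := by
    rw [Finset.sum_ite_eq' Finset.univ i (fun j => if r ∈ S j then w j else 0)]
    simp
  rw [this, ← Finset.sum_add_distrib]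
  apply Finset.sum_congr rfl
  intro j _
  by_cases hj : r ∈ S j
  · by_cases h1 : (j:ℕ) < (i:ℕ)
    · have h2 : (j:ℕ) < (i:ℕ) + 1 := by omega
      have h3 : ¬ j = i := by intro h; subst h; omega
      simp [hj, h1, h2, h3]
    · by_cases h2 : j = i
      · subst h2; simp [hj, h1]
      · have h3 : ¬ (j:ℕ) < (i:ℕ) + 1 := by
          have : (j:ℕ) ≠ (i:ℕ) := fun h => h2 (Fin.ext h)
          omega
        simp [hj, h1, h2, h3]
  · simp [hj]

end Aux

/-- The `(λ, μ)`-smoothness bound for the best reply algorithm on weighted resource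
allocation problems with nondecreasing, differentiable, semi-convex cost functions:
the algorithm is `βλ/(1-βμ)`-competitive. -/
theorem best_reply_smoothness_competitive
    (R : Type) [Fintype R] [DecidableEq R]
    (c : R → ℝ → ℝ)
    (hnonneg : ∀ r, ∀ x : ℝ, 0 ≤ x → 0 ≤ c r x)
    (hmono : ∀ r, MonotoneOn (c r) (Set.Ici 0))
    (hdiff : ∀ r, Differentiable ℝ (c r))
    (hconv : ∀ r, ConvexOn ℝ (Set.Ici 0) (fun t => t * c r t))
    (β : ℝ) (hβ : 1 ≤ β)
    (hβbound : ∀ r, ∀ x : ℝ, 0 ≤ x → c r x + deriv (c r) x * x ≤ β * c r x)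
    (lam μ : ℝ) (hlam : 0 < lam) (hμ : 0 ≤ μ) (hμβ : μ < 1 / β)
    (hsmooth : ∀ r, ∀ x y : ℝ, 0 ≤ x → 0 ≤ y →
      x * c r (x + y) ≤ lam * x * c r x + μ * y * c r y)
    (n : ℕ) (w : Fin n → ℝ) (hw : ∀ i, 0 < w i)
    (𝒮 : Fin n → Set (Finset R)) (h𝒮 : ∀ i, (𝒮 i).Nonempty)
    (S : Fin n → Finset R) (hS : ∀ i, S i ∈ 𝒮 i)
    -- the best reply property
    (hbr : ∀ i : Fin n, ∀ S' ∈ 𝒮 i,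
      ∑ r ∈ S i, c r ((∑ j ∈ Finset.univ.filter (fun j : Fin n => j < i ∧ r ∈ S j), w j) + w i)
        ≤ ∑ r ∈ S', c r ((∑ j ∈ Finset.univ.filter (fun j : Fin n => j < i ∧ r ∈ S j), w j) + w i))
    (Sstar : Fin n → Finset R) (hSstar : ∀ i, Sstar i ∈ 𝒮 i) :
    ∑ r : R, (∑ i ∈ Finset.univ.filter (fun i : Fin n => r ∈ S i), w i)
        * c r (∑ i ∈ Finset.univ.filter (fun i : Fin n => r ∈ S i), w i)
      ≤ β * lam / (1 - β * μ)
        * ∑ r : R, (∑ i ∈ Finset.univ.filter (fun i : Fin n => r ∈ Sstar i), w i)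
            * c r (∑ i ∈ Finset.univ.filter (fun i : Fin n => r ∈ Sstar i), w i) := by
  classical
  have hβ0 : (0:ℝ) < β := lt_of_lt_of_le one_pos hβ
  set wS : R → ℝ := fun r => ∑ i ∈ Finset.univ.filter (fun i : Fin n => r ∈ S i), w i with hwS
  set wT : R → ℝ := fun r => ∑ i ∈ Finset.univ.filter (fun i : Fin n => r ∈ Sstar i), w i
    with hwT
  set L : R → ℕ → ℝ := fun r k =>
    ∑ j ∈ Finset.univ.filter (fun j : Fin n => (j:ℕ) < k ∧ r ∈ S j), w j with hL
  have hwS0 : ∀ r, 0 ≤ wS r := fun r => Finset.sum_nonneg fun i _ => (hw i).le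
  have hwT0 : ∀ r, 0 ≤ wT r := fun r => Finset.sum_nonneg fun i _ => (hw i).le
  have hL0 : ∀ r k, 0 ≤ L r k := fun r k => Finset.sum_nonneg fun i _ => (hw i).le
  have hLle : ∀ r k, L r k ≤ wS r := by
    intro r k
    apply Finset.sum_le_sum_of_subset_of_nonneg
    · intro j hj
      simp only [Finset.mem_filter, Finset.mem_univ, true_and] at hj ⊢
      exact hj.2
    · intro i _ _; exact (hw i).le
  have hLn : ∀ r, L r n = wS r := by
    intro r
    apply Finset.sum_congr _ (fun _ _ => rfl)
    apply Finset.filter_congr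
    intro j _
    simp [j.isLt]
  -- telescoping
  have htel : ∀ r : R, wS r * c r (wS r)
      = ∑ i : Fin n, (if r ∈ S i then
          (L r i + w i) * c r (L r i + w i) - (L r i) * c r (L r i) else 0) := by
    intro r
    have h0 : L r 0 = 0 := by simp [hL]
    have hts := Finset.sum_range_sub (fun k => (L r k) * c r (L r k)) n
    rw [h0] at hts
    have heq : ∀ i : Fin n,
        (fun k => (L r (k+1)) * c r (L r (k+1)) - (L r k) * c r (L r k)) (i:ℕ)
        = (if r ∈ S i then
            (L r i + w i) * c r (L r i + w i) - (L r i) * c r (L r i) else 0) := by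
      intro i
      have hs : L r ((i:ℕ)+1) = L r i + (if r ∈ S i then w i else 0) := br_Lsucc n w S r i
      by_cases hri : r ∈ S i
      · simp only [hri, if_true] at hs ⊢
        rw [hs]
      · simp only [hri, if_false, add_zero] at hs ⊢
        rw [hs]; ring
    rw [← Finset.sum_congr rfl (fun i _ => heq i),
      Fin.sum_univ_eq_sum_range (fun k => (L r (k+1)) * c r (L r (k+1)) - (L r k) * c r (L r k)) n,
      hts, hLn r]
    simp
  -- main chain
  set C : ℝ := ∑ r : R, wS r * c r (wS r) with hC
  set Cstar : ℝ := ∑ r : R, wT r * c r (wT r) with hCstar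
  have main : C ≤ β * lam * Cstar + β * μ * C := by
    have step1 : C = ∑ i : Fin n, ∑ r ∈ S i,
        ((L r i + w i) * c r (L r i + w i) - (L r i) * c r (L r i)) := by
      calc C = ∑ r : R, ∑ i : Fin n, (if r ∈ S i then
              (L r i + w i) * c r (L r i + w i) - (L r i) * c r (L r i) else 0) := by
            rw [hC]; exact Finset.sum_congr rfl fun r _ => htel r
        _ = ∑ i : Fin n, ∑ r : R, (if r ∈ S i then
              (L r i + w i) * c r (L r i + w i) - (L r i) * c r (L r i) else 0) :=
            Finset.sum_comm
        _ = ∑ i : Fin n, ∑ r ∈ S i,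
              ((L r i + w i) * c r (L r i + w i) - (L r i) * c r (L r i)) := by
            refine Finset.sum_congr rfl fun i _ => ?_
            rw [← Finset.sum_filter, Finset.filter_univ_mem]
    have step2 : C ≤ β * ∑ i : Fin n, ∑ r ∈ S i, w i * c r (L r i + w i) := by
      rw [step1, Finset.mul_sum]
      apply Finset.sum_le_sum
      intro i _
      rw [Finset.mul_sum]
      apply Finset.sum_le_sum
      intro r _
      exact br_step_bound (c r) (hdiff r) (hconv r) β (hβbound r) (L r i) (w i)
        (hL0 r i) (hw i)
    -- best reply
    have step3 : ∀ i : Fin n, ∑ r ∈ S i, w i * c r (L r i + w i)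
        ≤ ∑ r ∈ Sstar i, w i * c r (L r i + w i) := by
      intro i
      rw [← Finset.mul_sum, ← Finset.mul_sum]
      apply mul_le_mul_of_nonneg_left _ (hw i).le
      have hfix : ∀ r : R, (Finset.univ.filter (fun j : Fin n => j < i ∧ r ∈ S j))
          = (Finset.univ.filter (fun j : Fin n => (j:ℕ) < (i:ℕ) ∧ r ∈ S j)) := by
        intro r
        apply Finset.filter_congr
        intro j _
        rw [Fin.lt_def]
      have hthis := hbr i (Sstar i) (hSstar i)
      simp only [hfix] at hthis
      exact hthis
    have step4 : ∀ i : Fin n, ∑ r ∈ Sstar i, w i * c r (L r i + w i)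
        ≤ ∑ r ∈ Sstar i, w i * c r (wS r + wT r) := by
      intro i
      apply Finset.sum_le_sum
      intro r hr
      apply mul_le_mul_of_nonneg_left _ (hw i).le
      have hwiT : w i ≤ wT r := by
        apply Finset.single_le_sum (fun j _ => (hw j).le)
        simp [hr]
      apply hmono r (Set.mem_Ici.2 (by have := hL0 r i; have := (hw i).le; linarith))
        (Set.mem_Ici.2 (by have := hwS0 r; have := hwT0 r; linarith))
      linarith [hLle r i]
    have step5 : ∑ i : Fin n, ∑ r ∈ Sstar i, w i * c r (wS r + wT r)
        = ∑ r : R, wT r * c r (wS r + wT r) := by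
      have h1 : ∀ i : Fin n, ∑ r ∈ Sstar i, w i * c r (wS r + wT r)
          = ∑ r : R, if r ∈ Sstar i then w i * c r (wS r + wT r) else 0 := by
        intro i; rw [← Finset.sum_filter, Finset.filter_univ_mem]
      rw [Finset.sum_congr rfl fun i _ => h1 i, Finset.sum_comm]
      refine Finset.sum_congr rfl fun r _ => ?_
      rw [← Finset.sum_filter, ← Finset.sum_mul]
    have hstep6 : ∀ r : R, wT r * c r (wS r + wT r)
        ≤ lam * wT r * c r (wT r) + μ * wS r * c r (wS r) := by
      intro r
      have h := hsmooth r (wT r) (wS r) (hwT0 r) (hwS0 r)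
      rwa [add_comm (wT r) (wS r)] at h
    calc C ≤ β * ∑ i : Fin n, ∑ r ∈ S i, w i * c r (L r i + w i) := step2
      _ ≤ β * ∑ i : Fin n, ∑ r ∈ Sstar i, w i * c r (wS r + wT r) := by
          apply mul_le_mul_of_nonneg_left _ hβ0.le
          exact Finset.sum_le_sum fun i _ => le_trans (step3 i) (step4 i)
      _ = β * ∑ r : R, wT r * c r (wS r + wT r) := by rw [step5]
      _ ≤ β * ∑ r : R, (lam * wT r * c r (wT r) + μ * wS r * c r (wS r)) := by
          apply mul_le_mul_of_nonneg_left _ hβ0.le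
          exact Finset.sum_le_sum fun r _ => hstep6 r
      _ = ∑ r : R, (β * lam * (wT r * c r (wT r)) + β * μ * (wS r * c r (wS r))) := by
          rw [Finset.mul_sum]
          exact Finset.sum_congr rfl fun r _ => by ring
      _ = β * lam * Cstar + β * μ * C := by
          rw [Finset.sum_add_distrib, ← Finset.mul_sum, ← Finset.mul_sum, hCstar, hC]
  have hβμ : β * μ < 1 := by
    have h := (lt_div_iff₀ hβ0).mp hμβ
    nlinarith
  have h1 : (0:ℝ) < 1 - β * μ := by linarith
  rw [div_mul_eq_mul_div, le_div_iff₀ h1]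
  nlinarith [main]
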